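/- Let A, B ∈ O(n,k,β) satisfy A² = −I_n and B² = −I_n (so Inn_A and Inn_B are Type 3 k-involutions of SO(n,k,β)). Then there exists Q ∈ O(n,k,β) with Q⁻¹·A·Q = B. In particular, SO(n,k,β) has at most one isomorphy class of Type 3 k-involutions over O(n,k,β). -/

import Mathlib

open Matrix

open LinearMap (BilinForm)

section Reflection
variable {K : Type*} [Field K] {V : Type*} [AddCommGroup V] [Module K V]

noncomputable def reflMap (β : BilinForm K V) (z : V) : V →ₗ[K] V :=
  LinearMap.id - (2 / β z z) • (LinearMap.smulRight (β.flip z) z)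

theorem reflMap_apply (β : BilinForm K V) (z x : V) :
    reflMap β z x = x - ((2 / β z z) * β x z) • z := by
  simp [reflMap, mul_smul, LinearMap.smul_apply]

theorem reflMap_isometry (β : BilinForm K V) (hs : β.IsSymm) {z : V} (hz : β z z ≠ 0)
    (x y : V) : β (reflMap β z x) (reflMap β z y) = β x y := by
  rw [reflMap_apply, reflMap_apply]
  have h1 : β z y = β y z := hs.eq z y
  simp only [_root_.map_sub, _root_.map_smul, LinearMap.sub_apply, LinearMap.smul_apply, smul_eq_mul]
  field_simp
  ring_nf
  rw [h1]
  ring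

theorem reflMap_involutive (β : BilinForm K V) {z : V} (hz : β z z ≠ 0)
    (x : V) : reflMap β z (reflMap β z x) = x := by
  rw [reflMap_apply, reflMap_apply]
  simp only [_root_.map_sub, _root_.map_smul, LinearMap.sub_apply, LinearMap.smul_apply, smul_eq_mul]
  field_simp
  module

theorem reflMap_fix (β : BilinForm K V) {z x : V} (hx : β x z = 0) : reflMap β z x = x := by
  simp [reflMap_apply, hx]

noncomputable def reflEquiv (β : BilinForm K V) {z : V} (hz : β z z ≠ 0) :
    V ≃ₗ[K] V :=
  LinearEquiv.ofInvolutive (reflMap β z) (reflMap_involutive β hz)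

@[simp] theorem reflEquiv_apply (β : BilinForm K V) {z : V} (hz : β z z ≠ 0)
    (x : V) : reflEquiv β hz x = reflMap β z x := rfl

theorem exists_reflection_isometry (β : BilinForm K V) (hs : β.IsSymm) (h2 : (2 : K) ≠ 0)
    {u w v : V} (huw : β u u = β w w) (hw : β w w ≠ 0)
    (hvu : β v u = 0) (hvw : β v w = 0) :
    ∃ R : V ≃ₗ[K] V, (∀ x y, β (R x) (R y) = β x y) ∧ R u = w ∧ R v = v := by
  set c := β w w with hc
  have hwu : β w u = β u w := hs.eq w u
  by_cases h : β u w = c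
  · -- use z = u + w then reflect in w
    have hzval : β (u + w) (u + w) = 2 * (2 * c) := by
      simp only [_root_.map_add, LinearMap.add_apply]
      rw [huw, h, hwu, h]; ring
    have hz : β (u + w) (u + w) ≠ 0 := by
      rw [hzval]; exact mul_ne_zero h2 (mul_ne_zero h2 hw)
    have hβu : β u (u + w) = 2 * c := by
      simp only [_root_.map_add, LinearMap.add_apply]; rw [huw, h]; ring
    have hcoef : 2 / β (u + w) (u + w) * β u (u + w) = 1 := by
      rw [hzval, hβu]
      field_simp
    have hfix1 : β v (u + w) = 0 := by
      simp only [_root_.map_add, LinearMap.add_apply]; rw [hvu, hvw, add_zero]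
    refine ⟨(reflEquiv β hz).trans (reflEquiv β hw), ?_, ?_, ?_⟩
    · intro x y
      simp only [LinearEquiv.trans_apply, reflEquiv_apply]
      rw [reflMap_isometry β hs hw, reflMap_isometry β hs hz]
    · simp only [LinearEquiv.trans_apply, reflEquiv_apply]
      have h1 : reflMap β (u + w) u = -w := by
        rw [reflMap_apply, hcoef, one_smul]; abel
      have hww : reflMap β w w = -w := by
        rw [reflMap_apply, div_mul_cancel₀ _ hw]; module
      rw [h1, _root_.map_neg, hww, neg_neg]
    · simp only [LinearEquiv.trans_apply, reflEquiv_apply]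
      rw [reflMap_fix β hfix1, reflMap_fix β hvw]
  · -- use z = u - w
    have ht : c - β u w ≠ 0 := sub_ne_zero.2 (Ne.symm h)
    have hzval : β (u - w) (u - w) = 2 * (c - β u w) := by
      simp only [_root_.map_sub, LinearMap.sub_apply]
      rw [hwu, huw]; ring
    have hz : β (u - w) (u - w) ≠ 0 := by rw [hzval]; exact mul_ne_zero h2 ht
    have hβu : β u (u - w) = c - β u w := by
      simp only [_root_.map_sub, LinearMap.sub_apply]; rw [huw]
    have hcoef : 2 / β (u - w) (u - w) * β u (u - w) = 1 := by
      rw [hzval, hβu]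
      field_simp
    have hfix1 : β v (u - w) = 0 := by
      simp only [_root_.map_sub, LinearMap.sub_apply]; rw [hvu, hvw, sub_zero]
    refine ⟨reflEquiv β hz, fun x y => reflMap_isometry β hs hz x y, ?_, ?_⟩
    · simp only [reflEquiv_apply]
      rw [reflMap_apply, hcoef, one_smul]; abel
    · simp only [reflEquiv_apply]
      exact reflMap_fix β hfix1
end Reflection
open Module

universe u v

section Main
variable {K : Type v} [Field K]

theorem conj_aux (h2 : (2 : K) ≠ 0) (d : ℕ) :
    ∀ (V : Type u) [AddCommGroup V] [Module K V] [FiniteDimensional K V]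
      (β : BilinForm K V), Module.finrank K V ≤ d → β.IsSymm → β.Nondegenerate →
      ∀ (A B : V →ₗ[K] V), (∀ x y, β (A x) (A y) = β x y) → (∀ x, A (A x) = -x) →
      (∀ x y, β (B x) (B y) = β x y) → (∀ x, B (B x) = -x) →
      ∃ Q : V ≃ₗ[K] V, (∀ x y, β (Q x) (Q y) = β x y) ∧ ∀ x, Q (B x) = A (Q x) := by
  induction d with
  | zero =>
    intro V _ _ _ β hd hs hnd A B hAi hA2 hBi hB2
    have h0 : Module.finrank K V = 0 := Nat.le_zero.1 hd
    have : Subsingleton V := Module.finrank_zero_iff.1 h0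
    exact ⟨LinearEquiv.refl K V, fun x y => rfl, fun x => Subsingleton.elim _ _⟩
  | succ d ih =>
    intro V _ _ _ β hd hs hnd A B hAi hA2 hBi hB2
    rcases subsingleton_or_nontrivial V with hV | hV
    · exact ⟨LinearEquiv.refl K V, fun x y => rfl, fun x => Subsingleton.elim _ _⟩
    haveI : Invertible (2 : K) := invertibleOfNonzero h2
    have hβne : β ≠ 0 := by
      intro hβ
      obtain ⟨x, hx⟩ := exists_ne (0 : V)
      exact hx (hnd.1 x (fun y => by rw [hβ]; rfl))
    obtain ⟨v, hv⟩ := LinearMap.BilinForm.exists_bilinForm_self_ne_zero hβne (LinearMap.BilinForm.isSymm_iff.1 hs)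
    replace hv : β v v ≠ 0 := hv
    set c := β v v with hcdef
    -- basic orthogonality facts
    have hselfA : β (A v) (A v) = c := hAi v v
    have hselfB : β (B v) (B v) = c := hBi v v
    have hvAv : β v (A v) = 0 := by
      have h1 := hAi v (A v)
      rw [hA2 v, _root_.map_neg] at h1
      have h3 : β v (A v) = β (A v) v := hs.eq v (A v)
      have : (2 : K) * β v (A v) = 0 := by
        rw [two_mul]
        nth_rewrite 1 [h3]
        rw [← h1]; ring
      rcases mul_eq_zero.1 this with h | h
      · exact absurd h h2
      · exact h
    have hvBv : β v (B v) = 0 := by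
      have h1 := hBi v (B v)
      rw [hB2 v, _root_.map_neg] at h1
      have h3 : β v (B v) = β (B v) v := hs.eq v (B v)
      have : (2 : K) * β v (B v) = 0 := by
        rw [two_mul]
        nth_rewrite 1 [h3]
        rw [← h1]; ring
      rcases mul_eq_zero.1 this with h | h
      · exact absurd h h2
      · exact h
    -- Step 1: isometry R with R (B v) = A v, R v = v
    obtain ⟨R, hRiso, hRu, hRv⟩ := exists_reflection_isometry β hs h2
      (u := B v) (w := A v) (v := v) (hselfB.trans hselfA.symm)
      (by rw [hselfA]; exact hv) hvBv hvAv
    have hRsym : ∀ x y, β (R.symm x) (R.symm y) = β x y := by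
      intro x y
      have h := hRiso (R.symm x) (R.symm y)
      rw [R.apply_symm_apply, R.apply_symm_apply] at h
      exact h.symm
    -- conjugated map A'
    set A' : V →ₗ[K] V := R.symm.toLinearMap ∘ₗ A ∘ₗ R.toLinearMap with hA'def
    have hA'app : ∀ x, A' x = R.symm (A (R x)) := fun x => rfl
    have hA'i : ∀ x y, β (A' x) (A' y) = β x y := by
      intro x y
      rw [hA'app, hA'app, hRsym, hAi, hRiso]
    have hA'2 : ∀ x, A' (A' x) = -x := by
      intro x
      rw [hA'app, hA'app, R.apply_symm_apply, hA2 (R x), _root_.map_neg, R.symm_apply_apply]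
    have hA'v : A' v = B v := by
      rw [hA'app, hRv, ← hRu, R.symm_apply_apply]
    have hA'Bv : A' (B v) = -v := by
      rw [hA'app, hRu, hA2, _root_.map_neg, ← hRv, R.symm_apply_apply, hRv]
    -- the plane P and its orthogonal complement W
    set P : Submodule K V := Submodule.span K {v, B v} with hPdef
    have hvP : v ∈ P := Submodule.subset_span (by simp)
    have hBvP : B v ∈ P := Submodule.subset_span (by simp)
    have hBBv : B (B v) = -v := hB2 v
    have hBvv : β (B v) v = 0 := hs.isRefl v (B v) hvBv
    have hBP : ∀ x ∈ P, B x ∈ P := by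
      intro x hx
      obtain ⟨a, b, rfl⟩ := Submodule.mem_span_pair.1 hx
      refine Submodule.mem_span_pair.2 ⟨-b, a, ?_⟩
      rw [_root_.map_add, _root_.map_smul, _root_.map_smul, hBBv]
      module
    have hA'P : ∀ x ∈ P, A' x ∈ P := by
      intro x hx
      obtain ⟨a, b, rfl⟩ := Submodule.mem_span_pair.1 hx
      refine Submodule.mem_span_pair.2 ⟨-b, a, ?_⟩
      rw [_root_.map_add, _root_.map_smul, _root_.map_smul, hA'v, hA'Bv]
      module
    have hA'B : ∀ x ∈ P, A' x = B x := by
      intro x hx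
      obtain ⟨a, b, rfl⟩ := Submodule.mem_span_pair.1 hx
      rw [_root_.map_add, _root_.map_add, _root_.map_smul, _root_.map_smul, _root_.map_smul, _root_.map_smul, hA'v, hA'Bv, hBBv]
    have hPnd : (β.restrict P).Nondegenerate := by
      refine (LinearMap.IsRefl.nondegenerate_iff_separatingLeft
        (⟨fun x y => hs.eq x y⟩ : (β.restrict P).IsSymm).isRefl).2 ?_
      intro m hm
      obtain ⟨a, b, hab⟩ := Submodule.mem_span_pair.1 m.2
      have h1 := hm ⟨v, hvP⟩
      have h2' := hm ⟨B v, hBvP⟩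
      rw [LinearMap.BilinForm.restrict_apply] at h1 h2'
      have hmv : β (m : V) v = a * c := by
        rw [← hab, _root_.map_add, LinearMap.add_apply, _root_.map_smul, _root_.map_smul, LinearMap.smul_apply,
          LinearMap.smul_apply, hBvv, ← hcdef]
        simp [smul_eq_mul]
      have hmbv : β (m : V) (B v) = b * c := by
        rw [← hab, _root_.map_add, LinearMap.add_apply, _root_.map_smul, _root_.map_smul, LinearMap.smul_apply,
          LinearMap.smul_apply, hvBv, hselfB]
        simp [smul_eq_mul]
      have ha : a = 0 := by
        have this : β (m : V) v = 0 := h1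
        rw [hmv] at this
        rcases mul_eq_zero.1 this with h | h
        · exact h
        · exact absurd h hv
      have hb : b = 0 := by
        have this : β (m : V) (B v) = 0 := h2'
        rw [hmbv] at this
        rcases mul_eq_zero.1 this with h | h
        · exact h
        · exact absurd h hv
      apply Subtype.ext
      rw [← hab, ha, hb]
      simp
    have hrefl : β.IsRefl := hs.isRefl
    have hcompl : IsCompl P (β.orthogonal P) :=
      LinearMap.BilinForm.isCompl_orthogonal_of_restrict_nondegenerate hrefl hPnd
    set W : Submodule K V := β.orthogonal P with hWdef
    have hWnd : (β.restrict W).Nondegenerate := by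
      apply β.nondegenerate_restrict_of_disjoint_orthogonal hrefl
      rw [hWdef, LinearMap.BilinForm.orthogonal_orthogonal hnd hrefl]
      exact hcompl.disjoint.symm
    have horth : ∀ (p : V), p ∈ P → ∀ (x : V), x ∈ W → β p x = 0 := by
      intro p hp x hx
      exact (LinearMap.BilinForm.mem_orthogonal_iff.1 hx) p hp
    have hBW : ∀ x ∈ W, B x ∈ W := by
      intro x hx
      rw [LinearMap.BilinForm.mem_orthogonal_iff]
      intro p hp
      obtain ⟨a, b, rfl⟩ := Submodule.mem_span_pair.1 hp
      have hp' : b • v + (-a) • B v ∈ P := Submodule.mem_span_pair.2 ⟨b, -a, rfl⟩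
      have hBp' : B (b • v + (-a) • B v) = a • v + b • B v := by
        rw [_root_.map_add, _root_.map_smul, _root_.map_smul, hBBv]
        module
      show β (a • v + b • B v) (B x) = 0
      rw [← hBp', hBi]
      exact horth _ hp' x hx
    have hA'W : ∀ x ∈ W, A' x ∈ W := by
      intro x hx
      rw [LinearMap.BilinForm.mem_orthogonal_iff]
      intro p hp
      obtain ⟨a, b, rfl⟩ := Submodule.mem_span_pair.1 hp
      have hp' : b • v + (-a) • B v ∈ P := Submodule.mem_span_pair.2 ⟨b, -a, rfl⟩
      have hA'p' : A' (b • v + (-a) • B v) = a • v + b • B v := by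
        rw [_root_.map_add, _root_.map_smul, _root_.map_smul, hA'v, hA'Bv]
        module
      show β (a • v + b • B v) (A' x) = 0
      rw [← hA'p', hA'i]
      exact horth _ hp' x hx
    -- restricted data on W
    set βW : BilinForm K W := β.restrict W with hβWdef
    have hsW : βW.IsSymm := ⟨fun x y => hs.eq x y⟩
    set Br : W →ₗ[K] W := B.restrict hBW with hBrdef
    set A'r : W →ₗ[K] W := A'.restrict hA'W with hA'rdef
    have hBrc : ∀ x : W, (Br x : V) = B x := fun x => rfl
    have hA'rc : ∀ x : W, (A'r x : V) = A' x := fun x => rfl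
    have hBri : ∀ x y : W, βW (Br x) (Br y) = βW x y := by
      intro x y
      show β (B x) (B y) = β (x : V) y
      exact hBi x y
    have hA'ri : ∀ x y : W, βW (A'r x) (A'r y) = βW x y := by
      intro x y
      show β (A' x) (A' y) = β (x : V) y
      exact hA'i x y
    have hBr2 : ∀ x : W, Br (Br x) = -x := by
      intro x
      apply Subtype.ext
      show B (B x) = -(x : V)
      exact hB2 x
    have hA'r2 : ∀ x : W, A'r (A'r x) = -x := by
      intro x
      apply Subtype.ext
      show A' (A' x) = -(x : V)
      exact hA'2 x
    -- rank bound
    have hv0 : v ≠ 0 := by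
      intro h
      apply hv
      rw [hcdef, h]
      simp
    haveI : Nontrivial P := ⟨⟨⟨v, hvP⟩, 0, by simp [hv0]⟩⟩
    have hPpos : 0 < Module.finrank K P := Module.finrank_pos
    have hsum : Module.finrank K P + Module.finrank K W = Module.finrank K V :=
      Submodule.finrank_add_eq_of_isCompl hcompl
    have hWd : Module.finrank K W ≤ d := by omega
    -- induction hypothesis on W
    obtain ⟨Q₁, hQ₁i, hQ₁c⟩ := ih W βW hWd hsW hWnd A'r Br hA'ri hA'r2 hBri hBr2
    -- assemble
    set e := Submodule.prodEquivOfIsCompl P W hcompl with hedef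
    set Q' : V ≃ₗ[K] V :=
      e.symm.trans (((LinearEquiv.refl K P).prodCongr Q₁).trans e) with hQ'def
    have hQ'app : ∀ (p : P) (w : W), Q' ((p : V) + (w : V)) = (p : V) + (Q₁ w : V) := by
      intro p w
      have h1 : e.symm ((p : V) + (w : V)) = (p, w) := by
        rw [LinearEquiv.symm_apply_eq]
        rfl
      rw [hQ'def]
      simp only [LinearEquiv.trans_apply, h1, LinearEquiv.prodCongr_apply]
      rfl
    have hdecomp : ∀ x : V, ∃ (p : P) (w : W), x = (p : V) + (w : V) := by
      intro x
      have hx : x ∈ P ⊔ W := by rw [hcompl.sup_eq_top]; trivial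
      obtain ⟨y, hy, z, hz, hxyz⟩ := Submodule.mem_sup.1 hx
      exact ⟨⟨y, hy⟩, ⟨z, hz⟩, hxyz.symm⟩
    have hQ'i : ∀ x y, β (Q' x) (Q' y) = β x y := by
      intro x y
      obtain ⟨p, w, rfl⟩ := hdecomp x
      obtain ⟨p', w', rfl⟩ := hdecomp y
      rw [hQ'app p w, hQ'app p' w']
      have e1 : β (p : V) (Q₁ w' : V) = 0 := horth _ p.2 _ (Q₁ w').2
      have e2 : β ((Q₁ w : W) : V) (p' : V) = 0 := hrefl _ _ (horth _ p'.2 _ (Q₁ w).2)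
      have e3 : β (p : V) (w' : V) = 0 := horth _ p.2 _ w'.2
      have e4 : β (w : V) (p' : V) = 0 := hrefl _ _ (horth _ p'.2 _ w.2)
      have e5 : β ((Q₁ w : W) : V) ((Q₁ w' : W) : V) = β (w : V) (w' : V) := hQ₁i w w'
      simp only [_root_.map_add, LinearMap.add_apply]
      rw [e1, e2, e3, e4, e5]
    have hQ'c : ∀ x, Q' (B x) = A' (Q' x) := by
      intro x
      obtain ⟨p, w, rfl⟩ := hdecomp x
      have hB1 : B ((p : V) + (w : V)) = ((⟨B p, hBP _ p.2⟩ : P) : V) + ((Br w : W) : V) := by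
        rw [_root_.map_add]; rfl
      rw [hB1, hQ'app, hQ₁c, hQ'app, _root_.map_add,
        show ((⟨B p, hBP _ p.2⟩ : P) : V) = B (p : V) from rfl, hA'B _ p.2, hA'rc (Q₁ w)]
    refine ⟨Q'.trans R, ?_, ?_⟩
    · intro x y
      simp only [LinearEquiv.trans_apply]
      rw [hRiso, hQ'i]
    · intro x
      simp only [LinearEquiv.trans_apply]
      rw [hQ'c, hA'app, R.apply_symm_apply]
end Main

/-- Any two Type 3 involutions of `SO(n,k,β)` are isomorphic over `O(n,k,β)`: if
`A, B ∈ O(n,k,β)` with `A² = B² = -I`, then `A` and `B` are conjugate by an element of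
`O(n,k,β)`. -/
theorem type3_isomorphy {k : Type*} [Field k]
    (hchar : (2 : k) ≠ 0) {n : ℕ} (hn : 2 < n)
    (M : Matrix (Fin n) (Fin n) k) (hMdiag : M.IsDiag) (hM : IsUnit M)
    (A B : Matrix (Fin n) (Fin n) k)
    (hAorth : Aᵀ * M * A = M) (hBorth : Bᵀ * M * B = M)
    (hA2 : A * A = -1) (hB2 : B * B = -1) :
    ∃ Q : Matrix (Fin n) (Fin n) k, Qᵀ * M * Q = M ∧ Q⁻¹ * A * Q = B := by
  set β : BilinForm k (Fin n → k) := Matrix.toLinearMap₂' k M with hβ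
  have hMsymm : Mᵀ = M := hMdiag.isSymm
  have hMij : ∀ i j, M i j = M j i := fun i j => congrFun (congrFun hMsymm j) i
  have hs : β.IsSymm := by
    refine ⟨fun x y => ?_⟩
    simp only [hβ, Matrix.toLinearMap₂'_apply, smul_eq_mul, RingHom.id_apply]
    rw [Finset.sum_comm]
    refine Finset.sum_congr rfl fun i _ => Finset.sum_congr rfl fun j _ => ?_
    rw [hMij j i]; ring
  have hdet : M.det ≠ 0 := ((Matrix.isUnit_iff_isUnit_det M).1 hM).ne_zero
  have hnd : β.Nondegenerate := by
    exact (Matrix.nondegenerate_of_det_ne_zero hdet).toLinearMap₂'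
  have hdot : ∀ (X : Matrix (Fin n) (Fin n) k) (x y : Fin n → k),
      (X *ᵥ x) ⬝ᵥ (M *ᵥ (X *ᵥ y)) = x ⬝ᵥ ((Xᵀ * M * X) *ᵥ y) := by
    intro X x y
    rw [Matrix.mulVec_mulVec, Matrix.dotProduct_mulVec, ← Matrix.vecMul_transpose,
      Matrix.vecMul_vecMul, ← Matrix.dotProduct_mulVec, ← Matrix.mul_assoc]
  have happ : ∀ (x y : Fin n → k), β x y = x ⬝ᵥ (M *ᵥ y) := fun x y =>
    Matrix.toLinearMap₂'_apply' M x y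
  set Am : (Fin n → k) →ₗ[k] (Fin n → k) := Matrix.toLin' A with hAm
  set Bm : (Fin n → k) →ₗ[k] (Fin n → k) := Matrix.toLin' B with hBm
  have hAmapp : ∀ x, Am x = A *ᵥ x := fun x => Matrix.toLin'_apply A x
  have hBmapp : ∀ x, Bm x = B *ᵥ x := fun x => Matrix.toLin'_apply B x
  have hAi : ∀ x y, β (Am x) (Am y) = β x y := by
    intro x y
    rw [happ, happ, hAmapp, hAmapp, hdot, hAorth]
  have hBi : ∀ x y, β (Bm x) (Bm y) = β x y := by
    intro x y
    rw [happ, happ, hBmapp, hBmapp, hdot, hBorth]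
  have hA2m : ∀ x, Am (Am x) = -x := by
    intro x
    rw [hAmapp, hAmapp, Matrix.mulVec_mulVec, hA2, Matrix.neg_mulVec, Matrix.one_mulVec]
  have hB2m : ∀ x, Bm (Bm x) = -x := by
    intro x
    rw [hBmapp, hBmapp, Matrix.mulVec_mulVec, hB2, Matrix.neg_mulVec, Matrix.one_mulVec]
  obtain ⟨Q, hQi, hQc⟩ := conj_aux hchar (Module.finrank k (Fin n → k)) (Fin n → k) β
    le_rfl hs hnd Am Bm hAi hA2m hBi hB2m
  set Qm : Matrix (Fin n) (Fin n) k := LinearMap.toMatrix' (Q : (Fin n → k) →ₗ[k] (Fin n → k))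
    with hQm
  set Qm' : Matrix (Fin n) (Fin n) k :=
    LinearMap.toMatrix' (Q.symm : (Fin n → k) →ₗ[k] (Fin n → k)) with hQm'
  have hmul : ∀ x, Qm *ᵥ x = Q x := by
    intro x
    rw [← Matrix.toLin'_apply, hQm, Matrix.toLin'_toMatrix']
    rfl
  have hQQ' : Qm * Qm' = 1 := by
    rw [hQm, hQm', ← LinearMap.toMatrix'_comp]
    have : (Q : (Fin n → k) →ₗ[k] (Fin n → k)) ∘ₗ (Q.symm : (Fin n → k) →ₗ[k] (Fin n → k)) =
        LinearMap.id := by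
      apply LinearMap.ext; intro x
      simp
    rw [this, LinearMap.toMatrix'_id]
  have hQ'Q : Qm' * Qm = 1 := by
    rw [hQm, hQm', ← LinearMap.toMatrix'_comp]
    have : (Q.symm : (Fin n → k) →ₗ[k] (Fin n → k)) ∘ₗ (Q : (Fin n → k) →ₗ[k] (Fin n → k)) =
        LinearMap.id := by
      apply LinearMap.ext; intro x
      simp
    rw [this, LinearMap.toMatrix'_id]
  have hinv : Qm⁻¹ = Qm' := Matrix.inv_eq_right_inv hQQ'
  refine ⟨Qm, ?_, ?_⟩
  · have hbil : ∀ x y : Fin n → k, x ⬝ᵥ ((Qmᵀ * M * Qm) *ᵥ y) = x ⬝ᵥ (M *ᵥ y) := by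
      intro x y
      rw [← hdot, hmul, hmul]
      calc (Q x) ⬝ᵥ (M *ᵥ (Q y)) = β (Q x) (Q y) := (happ _ _).symm
        _ = β x y := hQi x y
        _ = x ⬝ᵥ (M *ᵥ y) := happ x y
    have hsingle : ∀ (X : Matrix (Fin n) (Fin n) k) (i j : Fin n),
        (Pi.single i 1) ⬝ᵥ (X *ᵥ (Pi.single j 1)) = X i j := by
      intro X i j
      simp [Matrix.mulVec_single, single_dotProduct]
    ext i j
    have h := hbil (Pi.single i 1) (Pi.single j 1)
    rw [hsingle, hsingle] at h
    exact h
  · have hAQ : A * Qm = Qm * B := by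
      apply Matrix.toLin'.injective
      apply LinearMap.ext
      intro x
      rw [Matrix.toLin'_apply, Matrix.toLin'_apply, ← Matrix.mulVec_mulVec,
        ← Matrix.mulVec_mulVec, hmul]
      calc A *ᵥ (Q x) = Am (Q x) := (hAmapp _).symm
        _ = Q (Bm x) := (hQc x).symm
        _ = Qm *ᵥ (B *ᵥ x) := by rw [hmul, hBmapp]
    rw [Matrix.mul_assoc, hAQ, ← Matrix.mul_assoc, hinv, hQ'Q, Matrix.one_mul]
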